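/- Fix a real number ℓ > 0 and a natural number n ≥ 1. Then the expression C(g) = arcosh( cosh(ℓ/(6·⌊g/n⌋)) / (cosh(ℓ/(6·⌊g/n⌋)) − 1) ), which is the lower bound for the maximal orthosystole constructed in part (2) of Theorem B (thm:natleast2) for surfaces of signature (g, n) with largest boundary length ℓ, satisfies lim_{g→∞} C(g)/log g = 2, where g ranges over natural numbers, ⌊g/n⌋ denotes the integer part of g/n, and the limit is taken as g tends to infinity. In particular, the constructed orthosystole grows at the same rate 2·log g as Bavard's upper bound. -/

import Mathlib

open Filter Topology

/-- The inverse hyperbolic cosine. -/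
noncomputable def arcosh (x : ℝ) : ℝ := Real.log (x + Real.sqrt (x ^ 2 - 1))

lemma sinh_div_tendsto : Tendsto (fun t : ℝ => Real.sinh t / t) (𝓝[≠] (0:ℝ)) (𝓝 1) := by
  have h := Real.hasDerivAt_sinh 0
  rw [hasDerivAt_iff_tendsto_slope] at h
  simp only [Real.cosh_zero] at h
  refine h.congr' ?_
  filter_upwards [self_mem_nhdsWithin] with t ht
  simp [slope_def_field, Real.sinh_zero]

lemma cosh_aux : Tendsto (fun t : ℝ => (Real.cosh t - 1) / t ^ 2) (𝓝[≠] (0:ℝ)) (𝓝 (1/2)) := by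
  have hhalf : Tendsto (fun t : ℝ => t / 2) (𝓝[≠] (0:ℝ)) (𝓝[≠] (0:ℝ)) := by
    rw [tendsto_nhdsWithin_iff]
    constructor
    · have : Tendsto (fun t : ℝ => t / 2) (𝓝 (0:ℝ)) (𝓝 ((0:ℝ)/2)) :=
        (continuous_id.div_const 2).tendsto 0
      simpa using this.mono_left nhdsWithin_le_nhds
    · filter_upwards [self_mem_nhdsWithin] with t ht
      simp only [Set.mem_compl_iff, Set.mem_singleton_iff] at *
      intro h; exact ht (by linarith)
  have h1 : Tendsto (fun t : ℝ => Real.sinh (t/2) / (t/2)) (𝓝[≠] (0:ℝ)) (𝓝 1) :=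
    sinh_div_tendsto.comp hhalf
  have h2 : Tendsto (fun t : ℝ => (Real.sinh (t/2) / (t/2))^2 / 2) (𝓝[≠] (0:ℝ)) (𝓝 (1/2)) := by
    have := (h1.pow 2).div_const 2
    simpa using this
  refine h2.congr' ?_
  filter_upwards [self_mem_nhdsWithin] with t ht
  have ht' : (t:ℝ) ≠ 0 := ht
  have hcosh : Real.cosh t - 1 = 2 * Real.sinh (t/2)^2 := by
    have h2m := Real.cosh_two_mul (t/2)
    have hs := Real.cosh_sq (t/2)
    rw [show 2 * (t/2) = t by ring] at h2m
    rw [h2m, hs]; ring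
  rw [hcosh]
  field_simp

noncomputable def xx (t : ℝ) : ℝ := Real.cosh t / (Real.cosh t - 1)
noncomputable def hh (t : ℝ) : ℝ := t^2 * (xx t + Real.sqrt (xx t ^ 2 - 1))
lemma cosh_sub_one_pos {t : ℝ} (ht : 0 < t) : 0 < Real.cosh t - 1 := by
  have := Real.one_lt_cosh.mpr (ne_of_gt ht); linarith
lemma one_lt_xx {t : ℝ} (ht : 0 < t) : 1 < xx t := by
  have h := cosh_sub_one_pos ht
  rw [xx, one_lt_div h]; linarith
lemma hh_tendsto : Tendsto hh (𝓝[>] (0:ℝ)) (𝓝 4) := by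
  have hq : Tendsto (fun t : ℝ => (Real.cosh t - 1) / t ^ 2) (𝓝[>] (0:ℝ)) (𝓝 (1/2)) :=
    cosh_aux.mono_left (nhdsWithin_mono _ fun x hx => ne_of_gt hx)
  have hcosh : Tendsto (fun t : ℝ => Real.cosh t) (𝓝[>] (0:ℝ)) (𝓝 1) := by
    have := (Real.continuous_cosh.tendsto 0).mono_left (nhdsWithin_le_nhds (s := Set.Ioi (0:ℝ)))
    simpa using this
  have hu0 : Tendsto (fun t : ℝ => Real.cosh t / ((Real.cosh t - 1) / t ^ 2))
      (𝓝[>] (0:ℝ)) (𝓝 2) := by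
    have := hcosh.div hq (by norm_num)
    norm_num at this
    exact this
  have hu : Tendsto (fun t : ℝ => t^2 * xx t) (𝓝[>] (0:ℝ)) (𝓝 2) := by
    refine hu0.congr' ?_
    filter_upwards [self_mem_nhdsWithin] with t ht
    have ht' : (0:ℝ) < t := ht
    have h1 := cosh_sub_one_pos ht'
    rw [xx]
    field_simp
  have hsq : Tendsto (fun t : ℝ => (t^2 * xx t)^2 - (t^2)^2) (𝓝[>] (0:ℝ)) (𝓝 4) := by
    have h2 : Tendsto (fun t : ℝ => (t^2)^2) (𝓝[>] (0:ℝ)) (𝓝 0) := by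
      have := ((continuous_pow 2).pow 2).tendsto (0:ℝ)
      simpa [Pi.pow_def] using this.mono_left (nhdsWithin_le_nhds (s := Set.Ioi (0:ℝ)))
    have := (hu.pow 2).sub h2
    norm_num at this
    exact this
  have hv : Tendsto (fun t : ℝ => Real.sqrt ((t^2 * xx t)^2 - (t^2)^2)) (𝓝[>] (0:ℝ)) (𝓝 2) := by
    have := (Real.continuous_sqrt.tendsto 4).comp hsq
    simpa [Function.comp_def, show Real.sqrt 4 = 2 by
      rw [show (4:ℝ) = 2^2 by norm_num, Real.sqrt_sq (by norm_num : (0:ℝ) ≤ 2)]] using this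
  have hsum := hu.add hv
  norm_num at hsum
  refine hsum.congr' ?_
  filter_upwards [self_mem_nhdsWithin] with t ht
  have ht' : (0:ℝ) < t := ht
  have hx1 : 1 ≤ xx t := (one_lt_xx ht').le
  have hx0 : 0 ≤ xx t ^ 2 - 1 := by nlinarith
  have key : Real.sqrt ((t^2 * xx t)^2 - (t^2)^2) = t^2 * Real.sqrt (xx t ^ 2 - 1) := by
    rw [show (t^2 * xx t)^2 - (t^2)^2 = (t^2)^2 * (xx t ^2 - 1) by ring,
      Real.sqrt_mul (sq_nonneg _), Real.sqrt_sq (sq_nonneg t)]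
  rw [key, hh]; ring

lemma arcosh_eq {t : ℝ} (ht : 0 < t) :
    arcosh (xx t) = Real.log (hh t) - 2 * Real.log t := by
  have hx := one_lt_xx ht
  have hs : 0 ≤ Real.sqrt (xx t ^ 2 - 1) := Real.sqrt_nonneg _
  have hpos : 0 < xx t + Real.sqrt (xx t ^ 2 - 1) := by linarith
  have ht2 : (0:ℝ) < t^2 := by positivity
  have hfrac : xx t + Real.sqrt (xx t ^ 2 - 1) = hh t / t^2 := by
    rw [hh]; field_simp
  have hhpos : 0 < hh t := by rw [hh]; exact mul_pos ht2 hpos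
  rw [arcosh, hfrac, Real.log_div (ne_of_gt hhpos) (ne_of_gt ht2)]
  rw [show t^2 = t^(2:ℕ) by norm_num, Real.log_pow]
  push_cast; ring

theorem constructed_orthosystole_asymptotics (ℓ : ℝ) (hℓ : 0 < ℓ) (n : ℕ) (hn : 1 ≤ n) :
    Tendsto
      (fun g : ℕ =>
        arcosh (Real.cosh (ℓ / (6 * ((g / n : ℕ) : ℝ))) /
            (Real.cosh (ℓ / (6 * ((g / n : ℕ) : ℝ))) - 1)) /
          Real.log (g : ℝ))
      atTop (𝓝 2) := by
  have hn0 : 0 < n := hn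
  set m : ℕ → ℕ := fun g => g / n with hmdef
  set t : ℕ → ℝ := fun g => ℓ / (6 * (m g : ℝ)) with htdef
  show Tendsto (fun g : ℕ => arcosh (xx (t g)) / Real.log g) atTop (𝓝 2)
  -- m → ∞
  have hmtop : Tendsto (fun g => (m g : ℝ)) atTop atTop := by
    apply tendsto_natCast_atTop_atTop.comp
    apply tendsto_atTop_atTop.mpr
    intro b
    refine ⟨n * b, fun g hg => (Nat.le_div_iff_mul_le hn0).mpr (by rw [Nat.mul_comm]; exact hg)⟩
  have hm1 : ∀ᶠ g : ℕ in atTop, 1 ≤ m g := by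
    have := hmtop.eventually_ge_atTop 1
    filter_upwards [this] with g hg; exact_mod_cast hg
  -- t → 0⁺
  have httop : Tendsto t atTop (𝓝[>] (0:ℝ)) := by
    rw [tendsto_nhdsWithin_iff]
    constructor
    · have h6 : Tendsto (fun g => 6 * (m g:ℝ)) atTop atTop :=
        hmtop.const_mul_atTop (by norm_num)
      exact Tendsto.div_atTop tendsto_const_nhds h6
    · filter_upwards [hm1] with g hg
      have : (1:ℝ) ≤ (m g : ℝ) := by exact_mod_cast hg
      exact div_pos hℓ (by nlinarith)
  have hlog4 : Tendsto (fun g => Real.log (hh (t g))) atTop (𝓝 (Real.log 4)) :=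
    (Real.continuousAt_log (by norm_num)).tendsto.comp (hh_tendsto.comp httop)
  set A : ℕ → ℝ := fun g => arcosh (xx (t g)) - 2 * Real.log g with hAdef
  set c : ℝ := 2 * Real.log 6 - 2 * Real.log ℓ with hcdef
  -- identity
  have hkey : ∀ᶠ g : ℕ in atTop, A g =
      Real.log (hh (t g)) + c + 2 * (Real.log (m g) - Real.log g) := by
    filter_upwards [hm1] with g hg
    have hmg : (0:ℝ) < (m g : ℝ) := by exact_mod_cast hg
    have htg : 0 < t g := div_pos hℓ (by nlinarith)
    have hlogt : Real.log (t g) = Real.log ℓ - Real.log 6 - Real.log (m g) := by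
      rw [htdef]
      rw [Real.log_div (ne_of_gt hℓ) (by positivity), Real.log_mul (by norm_num) (ne_of_gt hmg)]
      ring
    rw [hAdef]
    simp only [arcosh_eq htg, hlogt, hcdef]
    ring
  -- bound on |A|
  have hbd : ∀ᶠ g : ℕ in atTop,
      |A g| ≤ (|Real.log 4| + 1) + |c| + 2 * Real.log (2*n) := by
    have hnear : ∀ᶠ g : ℕ in atTop, |Real.log (hh (t g)) - Real.log 4| ≤ 1 := by
      have := hlog4.eventually (Metric.closedBall_mem_nhds (Real.log 4) one_pos)
      filter_upwards [this] with g hg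
      simpa [Real.dist_eq] using hg
    filter_upwards [hkey, hnear, hm1, eventually_ge_atTop 1] with g hid hnr hmg hg1
    have hmg' : (1:ℝ) ≤ (m g : ℝ) := by exact_mod_cast hmg
    have hg1' : (1:ℝ) ≤ (g:ℝ) := by exact_mod_cast hg1
    have hmle : (m g : ℝ) ≤ (g : ℝ) := by exact_mod_cast Nat.div_le_self g n
    have hlog1 : Real.log (m g) ≤ Real.log g := Real.log_le_log (by linarith) hmle
    have hub : (g:ℝ) ≤ (2*n) * (m g : ℝ) := by
      have h1 : n * (m g) + g % n = g := Nat.div_add_mod g n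
      have h2 : g % n < n := Nat.mod_lt _ hn0
      have h3 : g < n * (m g + 1) := by rw [Nat.mul_add, Nat.mul_one]; omega
      have h4 : n * (m g + 1) ≤ 2 * n * m g := by nlinarith [hmg]
      have : g ≤ 2 * n * m g := by omega
      exact_mod_cast this
    have hn1 : (1:ℝ) ≤ 2*(n:ℝ) := by
      have : (1:ℝ) ≤ (n:ℝ) := by exact_mod_cast hn
      linarith
    have hlog2 : Real.log g ≤ Real.log (2*n) + Real.log (m g) := by
      rw [← Real.log_mul (by positivity) (by positivity)]
      exact Real.log_le_log (by linarith) hub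
    have hln2n : 0 ≤ Real.log (2*(n:ℝ)) := Real.log_nonneg hn1
    have habs : |Real.log (m g) - Real.log g| ≤ Real.log (2*n) := by
      rw [abs_le]
      constructor <;> [linarith; linarith]
    rw [hid]
    have h4' : |Real.log (hh (t g))| ≤ |Real.log 4| + 1 := by
      calc |Real.log (hh (t g))| ≤ |Real.log (hh (t g)) - Real.log 4| + |Real.log 4| := by
            have := abs_sub_abs_le_abs_sub (Real.log (hh (t g))) (Real.log 4)
            have := abs_abs_sub_abs_le_abs_sub (Real.log (hh (t g))) (Real.log 4)
            nlinarith [abs_nonneg (Real.log (hh (t g)) - Real.log 4)]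
        _ ≤ |Real.log 4| + 1 := by linarith
    calc |Real.log (hh (t g)) + c + 2 * (Real.log (m g) - Real.log g)|
        ≤ |Real.log (hh (t g))| + |c| + 2 * |Real.log (m g) - Real.log g| := by
          have := abs_add_le (Real.log (hh (t g)) + c) (2 * (Real.log (m g) - Real.log g))
          have := abs_add_le (Real.log (hh (t g))) c
          have := abs_mul (2:ℝ) (Real.log (m g) - Real.log g)
          rw [abs_mul] at *
          simp only [abs_two] at *
          linarith
      _ ≤ (|Real.log 4| + 1) + |c| + 2 * Real.log (2*n) := by linarith
  -- A / log g → 0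
  set K : ℝ := (|Real.log 4| + 1) + |c| + 2 * Real.log (2*n) with hKdef
  have hAz : Tendsto (fun g : ℕ => A g / Real.log g) atTop (𝓝 0) := by
    apply squeeze_zero_norm' (a := fun g : ℕ => K / Real.log g)
    · filter_upwards [hbd, eventually_ge_atTop 2] with g hb hg2
      have hlg : 0 < Real.log g := Real.log_pos (by exact_mod_cast hg2)
      rw [Real.norm_eq_abs, abs_div, abs_of_pos hlg]
      gcongr
    · exact Tendsto.div_atTop tendsto_const_nhds
        (Real.tendsto_log_atTop.comp tendsto_natCast_atTop_atTop)
  have := (tendsto_const_nhds (x := (2:ℝ)) (f := atTop)).add hAz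
  norm_num at this
  refine this.congr' ?_
  filter_upwards [eventually_ge_atTop 2] with g hg2
  have hlg : 0 < Real.log g := Real.log_pos (by exact_mod_cast hg2)
  rw [hAdef]
  field_simp
  ring
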